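/- Let Ξ be a type with decidable equality, U : Finset Ξ with U.card = N and N ≥ 1, K ≥ 1, and R : Fin K → Finset Ξ with R i ⊆ U for every i. Let z ∈ ℕ satisfy ((Finset.univ : Finset (Fin K)).biUnion R).card ≤ z and z ≤ N. Then, as an identity in ℚ, the probability ϱ(z) that a uniformly random z-element subset of U contains R i for at least one i satisfies: (((U.powersetCard z).filter (fun s => ∃ i, R i ⊆ s)).card : ℚ) / (N.choose z) = (1 / (N.choose z)) * ∑ over nonempty J in (Finset.univ : Finset (Fin K)).powerset of (−1)^(J.card + 1) * ((N − (J.biUnion R).card).choose (z − (J.biUnion R).card) : ℚ). -/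

import Mathlib

open Finset

theorem count_supersets_aux {Ξ : Type*} [DecidableEq Ξ] (U T : Finset Ξ) (hT : T ⊆ U) (z : ℕ)
    (hz : T.card ≤ z) :
    ((U.powersetCard z).filter (fun s => T ⊆ s)).card
      = (U.card - T.card).choose (z - T.card) := by
  rw [show U.card - T.card = (U \ T).card from (Finset.card_sdiff_of_subset hT).symm,
      ← Finset.card_powersetCard (z - T.card) (U \ T)]
  apply Finset.card_bij (fun s _ => s \ T)
  · intro s hs
    simp only [mem_filter, Finset.mem_powersetCard] at hs
    rw [Finset.mem_powersetCard]
    exact ⟨sdiff_subset_sdiff hs.1.1 le_rfl,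
      by rw [Finset.card_sdiff_of_subset hs.2, hs.1.2]⟩
  · intro a ha b hb h
    simp only [mem_filter, Finset.mem_powersetCard] at ha hb
    have := congrArg (· ∪ T) h
    simpa [Finset.sdiff_union_of_subset ha.2, Finset.sdiff_union_of_subset hb.2] using this
  · intro t ht
    rw [Finset.mem_powersetCard] at ht
    refine ⟨t ∪ T, ?_, ?_⟩
    · simp only [mem_filter, Finset.mem_powersetCard]
      have hdisj : Disjoint t T := Finset.disjoint_of_subset_left ht.1 (Finset.sdiff_disjoint)
      refine ⟨⟨Finset.union_subset (ht.1.trans (Finset.sdiff_subset)) hT, ?_⟩,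
        Finset.subset_union_right⟩
      rw [Finset.card_union_of_disjoint hdisj, ht.2]
      omega
    · have hdisj : Disjoint t T := Finset.disjoint_of_subset_left ht.1 (Finset.sdiff_disjoint)
      rw [Finset.union_sdiff_right, Finset.sdiff_eq_self_of_disjoint hdisj]

theorem inf'_filter_subset_aux {Ξ ι : Type*} [DecidableEq Ξ] (A : Finset (Finset Ξ))
    (R : ι → Finset Ξ) (J : Finset ι) (hJ : J.Nonempty) :
    J.inf' hJ (fun i => A.filter (fun s => R i ⊆ s))
      = A.filter (fun s => J.biUnion R ⊆ s) := by
  classical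
  induction hJ using Finset.Nonempty.cons_induction with
  | singleton i => simp
  | cons i J hi hJ ih =>
      rw [Finset.inf'_cons hJ, ih]
      ext s
      simp only [Finset.inf_eq_inter, Finset.mem_inter, Finset.mem_filter,
        Finset.cons_eq_insert, Finset.biUnion_insert, Finset.union_subset_iff]
      tauto

/-- Probability form of the main theorem: the probability ϱ(z) that a
uniformly random z-element subset of U contains at least one of the sets R i
is given by the inclusion–exclusion formula
ϱ(z) = (1/C(N,z)) Σ_{∅ ≠ J} (-1)^(|J|+1) C(N - r_J, z - r_J). -/
theorem prob_random_subset_contains_sdds {Ξ : Type*} [DecidableEq Ξ]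
    (U : Finset Ξ) (N : ℕ) (hU : U.card = N) (hN : 1 ≤ N)
    (K : ℕ) (hK : 1 ≤ K) (R : Fin K → Finset Ξ) (hR : ∀ i, R i ⊆ U)
    (z : ℕ) (hz1 : ((Finset.univ : Finset (Fin K)).biUnion R).card ≤ z)
    (hz2 : z ≤ N) :
    (((U.powersetCard z).filter (fun s => ∃ i, R i ⊆ s)).card : ℚ) /
        (N.choose z : ℚ) =
      (1 / (N.choose z : ℚ)) *
        ∑ J ∈ ((Finset.univ : Finset (Fin K)).powerset).filter
            (fun J => J.Nonempty),
          (-1 : ℚ) ^ (J.card + 1) *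
            ((N - (J.biUnion R).card).choose (z - (J.biUnion R).card) : ℚ) := by
  classical
  suffices h : (((U.powersetCard z).filter (fun s => ∃ i, R i ⊆ s)).card : ℚ)
      = ∑ J ∈ ((Finset.univ : Finset (Fin K)).powerset).filter (fun J => J.Nonempty),
          (-1 : ℚ) ^ (J.card + 1) *
            ((N - (J.biUnion R).card).choose (z - (J.biUnion R).card) : ℚ) by
    rw [h]; ring
  have key : (((U.powersetCard z).filter (fun s => ∃ i, R i ⊆ s)).card : ℤ)
      = ∑ J ∈ ((Finset.univ : Finset (Fin K)).powerset).filter (fun J => J.Nonempty),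
          (-1 : ℤ) ^ (J.card + 1) *
            ((N - (J.biUnion R).card).choose (z - (J.biUnion R).card) : ℤ) := by
    have hUnion : (U.powersetCard z).filter (fun s => ∃ i, R i ⊆ s)
        = (Finset.univ : Finset (Fin K)).biUnion
            (fun i => (U.powersetCard z).filter (fun s => R i ⊆ s)) := by
      ext s
      simp [Finset.mem_biUnion]
    rw [hUnion, Finset.inclusion_exclusion_card_biUnion]
    have step : ∀ t : ((Finset.univ : Finset (Fin K)).powerset.filter (fun J => J.Nonempty)),
        ((t.1.inf' (Finset.mem_filter.1 t.2).2
          (fun i => (U.powersetCard z).filter (fun s => R i ⊆ s))).card : ℤ)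
        = ((N - (t.1.biUnion R).card).choose (z - (t.1.biUnion R).card) : ℤ) := by
      intro t
      rw [inf'_filter_subset_aux]
      have hsub : t.1.biUnion R ⊆ U := by
        intro x hx
        rw [Finset.mem_biUnion] at hx
        obtain ⟨i, _, hxi⟩ := hx
        exact hR i hxi
      have hcard : (t.1.biUnion R).card ≤ z := by
        refine le_trans (Finset.card_le_card ?_) hz1
        exact Finset.biUnion_subset_biUnion_of_subset_left R (Finset.subset_univ _)
      rw [count_supersets_aux U _ hsub z hcard, hU]
    calc (∑ t : ((Finset.univ : Finset (Fin K)).powerset.filter (fun J => J.Nonempty)),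
            (-1 : ℤ) ^ (t.1.card + 1) *
              ((t.1.inf' (Finset.mem_filter.1 t.2).2
                (fun i => (U.powersetCard z).filter (fun s => R i ⊆ s))).card : ℤ))
        = ∑ t : ((Finset.univ : Finset (Fin K)).powerset.filter (fun J => J.Nonempty)),
            (-1 : ℤ) ^ (t.1.card + 1) *
              ((N - (t.1.biUnion R).card).choose (z - (t.1.biUnion R).card) : ℤ) := by
          exact Finset.sum_congr rfl (fun t _ => by rw [step t])
      _ = _ := by
          exact Finset.sum_attach _
            (fun (J : Finset (Fin K)) => (-1 : ℤ) ^ (J.card + 1) *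
              ((N - (J.biUnion R).card).choose (z - (J.biUnion R).card) : ℤ))
  exact_mod_cast key
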